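/- arXiv:0901.4520 — 5 statements merged into one kernel-verified Lean document; each statement's English description precedes it below -/
import Mathlib

section
/- Let q > 0, r = sqrt(q^2-q+1), p = 1/(1+q^3), and α, β real with α - β = (q+1)/r. Set z0 := β + (2q-1)/r and g0 := (z0 + α + β)/3. Then G(g0) = 0, G'(g0) = 0, and G''(g0) = 0, where G(g) = g^3 - (z0+α+β) g^2 + (z0(α+β) + αβ + 1) g - (αβ z0 + (1-p)α + pβ). -/
lemma deriv_cube_shift (c : ℝ) (x : ℝ) :
    deriv (fun g : ℝ => (g - c)^3) x = 3 * (x - c)^2 := by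
  simpa using (((hasDerivAt_id x).sub_const c).pow 3).deriv

lemma deriv_sq_shift (c : ℝ) (x : ℝ) :
    deriv (fun g : ℝ => 3 * ((g - c)^2)) x = 6 * (x - c) := by
  have h : HasDerivAt (fun g : ℝ => 3 * ((g - c)^2)) (3*(2*(x-c)^1*1)) x :=
    (((hasDerivAt_id x).sub_const c).pow 2).const_mul 3
  exact h.deriv.trans (by ring)

theorem triple_root_of_G (q : ℝ) (hq : 0 < q)
    (r : ℝ) (hr : r = Real.sqrt (q^2 - q + 1))
    (p : ℝ) (hp : p = 1 / (1 + q^3))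
    (α β : ℝ) (hαβ : α - β = (q + 1) / r)
    (z0 : ℝ) (hz0 : z0 = β + (2*q - 1) / r)
    (g0 : ℝ) (hg0 : g0 = (z0 + α + β) / 3)
    (G : ℝ → ℝ)
    (hG : G = fun g => g^3 - (z0 + α + β) * g^2
      + (z0 * (α + β) + α * β + 1) * g - (α * β * z0 + (1 - p) * α + p * β)) :
    G g0 = 0 ∧ deriv G g0 = 0 ∧ deriv (deriv G) g0 = 0 := by
  have hqq : (0:ℝ) < q^2 - q + 1 := by nlinarith
  have hr2 : r^2 = q^2 - q + 1 := by rw [hr, Real.sq_sqrt hqq.le]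
  have hrne : r ≠ 0 := (Real.sqrt_pos.mpr hqq).ne' ∘ (hr ▸ ·)
  have h1q3 : (1 + q^3) ≠ 0 := by positivity
  set a : ℝ := (q + 1) / r with ha
  set b : ℝ := (2*q - 1) / r with hb
  set c : ℝ := q / r with hc
  have hα : α = β + a := by linarith [hαβ]
  have hg0' : g0 = β + c := by
    rw [hg0, hz0, hα, ha, hb, hc]; field_simp; ring
  have hsum : a + b = 3 * c := by
    rw [ha, hb, hc]; field_simp; ring
  have hab : a * b + 1 = 3 * c^2 := by
    rw [ha, hb, hc]; field_simp; linear_combination hr2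
  have hpc : (1 - p) * a = c^3 := by
    rw [hp, ha, hc]; field_simp; linear_combination (q^3*(q+1)) * hr2
  -- the three coefficient identities
  have hS : z0 + α + β = 3 * g0 := by rw [hg0]; ring
  have hP : z0 * (α + β) + α * β + 1 = 3 * g0^2 := by
    rw [hz0, hα, hg0', hb]
    linear_combination hab + 2 * β * hsum + β * (by rw [hb] : ((2*q-1)/r : ℝ) = b)
  have hC : α * β * z0 + (1 - p) * α + p * β = g0^3 := by
    rw [hz0, hα, hg0', hb]
    linear_combination β^2 * hsum + β * hab + hpc
      + β^2 * (by rw [hb] : ((2*q-1)/r : ℝ) = b)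
  have key : G = fun g => (g - g0)^3 := by
    funext g
    rw [hG]
    linear_combination (-(g^2)) * hS + g * hP + (-1) * hC
  have hd1 : deriv G = fun x => 3 * ((x - g0)^2) := by
    funext x
    rw [key, deriv_cube_shift]
  refine ⟨?_, ?_, ?_⟩
  · rw [key]; simp
  · rw [hd1]; simp
  · rw [hd1, deriv_sq_shift]; simp
end

section
/- Let q > 0, r = sqrt(q^2-q+1), p = 1/(1+q^3), and let α, β, z0, u0 satisfy u0 - α = -1/r, u0 - β = q/r, z0 - u0 = (q-1)/r. Define F(u) = u^2/2 - u z0 + p log(u-α) + (1-p) log(u-β) for u > α. Then F'(u0) = 0, F''(u0) = 0, F'''(u0) = 0, and F''''(u0)/4! = -(q^2-q+1)/(4q). -/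
theorem F_derivatives_vanish (q : ℝ) (hq : 0 < q)
    (r : ℝ) (hr : r = Real.sqrt (q^2 - q + 1))
    (p : ℝ) (hp : p = 1 / (1 + q^3))
    (u0 : ℝ)
    (α β z0 : ℝ) (hα : α = u0 + 1 / r) (hβ : β = u0 - q / r)
    (hz0 : z0 = u0 + (q - 1) / r)
    (F : ℝ → ℝ)
    (hF : F = fun u => u^2 / 2 - u * z0 + p * Real.log (α - u)
      + (1 - p) * Real.log (u - β)) :
    deriv F u0 = 0 ∧ iteratedDeriv 2 F u0 = 0 ∧ iteratedDeriv 3 F u0 = 0 ∧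
      iteratedDeriv 4 F u0 / (Nat.factorial 4) = -(q^2 - q + 1) / (4 * q) := by
  have hq3 : (0:ℝ) < 1 + q^3 := by positivity
  have hs : (0:ℝ) < q^2 - q + 1 := by nlinarith [sq_nonneg (q-1)]
  have hr0 : 0 < r := hr ▸ Real.sqrt_pos.mpr hs
  have hr2 : r^2 = q^2 - q + 1 := by rw [hr, Real.sq_sqrt hs.le]
  have hrne : r ≠ 0 := hr0.ne'
  have hqne : q ≠ 0 := hq.ne'
  have hpne : (1+q^3) ≠ 0 := hq3.ne'
  set F1 : ℝ → ℝ := fun u => u - z0 - p / (α - u) + (1-p) / (u - β) with hF1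
  set F2 : ℝ → ℝ := fun u => 1 - p / (α - u)^2 - (1-p) / (u - β)^2 with hF2
  set F3 : ℝ → ℝ := fun u => -2*p / (α - u)^3 + 2*(1-p) / (u - β)^3 with hF3
  set F4 : ℝ → ℝ := fun u => -6*p / (α - u)^4 - 6*(1-p) / (u - β)^4 with hF4
  have hu0S : u0 ∈ Set.Ioo β α := by
    constructor
    · rw [hβ]; exact sub_lt_self _ (div_pos hq hr0)
    · rw [hα]; exact lt_add_of_pos_right _ (by positivity)
  have key : ∀ u ∈ Set.Ioo β α, HasDerivAt F (F1 u) u ∧ HasDerivAt F1 (F2 u) u ∧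
      HasDerivAt F2 (F3 u) u ∧ HasDerivAt F3 (F4 u) u := by
    intro u hu
    have hg : 0 < α - u := by linarith [hu.2]
    have hh : 0 < u - β := by linarith [hu.1]
    have hgne : α - u ≠ 0 := hg.ne'
    have hhne : u - β ≠ 0 := hh.ne'
    have dg : HasDerivAt (fun u : ℝ => α - u) (-1) u := by
      exact (hasDerivAt_id' u).const_sub α
    have dh : HasDerivAt (fun u : ℝ => u - β) 1 u := by
      exact (hasDerivAt_id' u).sub_const β
    refine ⟨?_, ?_, ?_, ?_⟩
    · rw [hF]
      have := ((((hasDerivAt_pow 2 u).div_const 2).sub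
          ((hasDerivAt_id u).mul_const z0)).add
          ((dg.log hgne).const_mul p)).add ((dh.log hhne).const_mul (1-p))
      refine this.congr_deriv ?_
      simp only [hF1, id_eq]
      push_cast
      ring
    · rw [hF1]
      have := ((((hasDerivAt_id u).sub_const z0).sub
          ((hasDerivAt_const u p).div dg hgne)).add
          ((hasDerivAt_const u (1-p)).div dh hhne))
      refine this.congr_deriv ?_
      simp only [hF2, id_eq]
      push_cast
      ring
    · rw [hF2]
      have := (((hasDerivAt_const u (1:ℝ)).sub
          ((hasDerivAt_const u p).div (dg.pow 2) (pow_ne_zero 2 hgne))).sub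
          ((hasDerivAt_const u (1-p)).div (dh.pow 2) (pow_ne_zero 2 hhne)))
      refine this.congr_deriv ?_
      simp only [hF3, id_eq, Pi.pow_apply]
      push_cast
      field_simp
      ring
    · rw [hF3]
      have := (((hasDerivAt_const u (-2*p)).div (dg.pow 3) (pow_ne_zero 3 hgne)).add
          ((hasDerivAt_const u (2*(1-p))).div (dh.pow 3) (pow_ne_zero 3 hhne)))
      refine this.congr_deriv ?_
      simp only [hF4, id_eq, Pi.pow_apply]
      push_cast
      field_simp
      ring
  have hmem : Set.Ioo β α ∈ nhds u0 := isOpen_Ioo.mem_nhds hu0S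
  have hd1 : deriv F =ᶠ[nhds u0] F1 := by
    filter_upwards [hmem] with u hu using ((key u hu).1).deriv
  have hd2 : deriv F1 =ᶠ[nhds u0] F2 := by
    filter_upwards [hmem] with u hu using ((key u hu).2.1).deriv
  have hd3 : deriv F2 =ᶠ[nhds u0] F3 := by
    filter_upwards [hmem] with u hu using ((key u hu).2.2.1).deriv
  have e1 : α - u0 = 1 / r := by rw [hα]; ring
  have e2 : u0 - β = q / r := by rw [hβ]; ring
  have hdF : deriv F u0 = F1 u0 := ((key u0 hu0S).1).deriv
  have hd2' : iteratedDeriv 2 F u0 = F2 u0 := by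
    rw [iteratedDeriv_succ, iteratedDeriv_one, hd1.deriv_eq]
    exact ((key u0 hu0S).2.1).deriv
  have hd3' : iteratedDeriv 3 F u0 = F3 u0 := by
    rw [iteratedDeriv_succ, iteratedDeriv_succ, iteratedDeriv_one,
      (hd1.deriv.trans hd2).deriv_eq]
    exact ((key u0 hu0S).2.2.1).deriv
  have hd4' : iteratedDeriv 4 F u0 = F4 u0 := by
    rw [iteratedDeriv_succ, iteratedDeriv_succ, iteratedDeriv_succ, iteratedDeriv_one,
      ((hd1.deriv.trans hd2).deriv.trans hd3).deriv_eq]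
    exact ((key u0 hu0S).2.2.2).deriv
  have hr4 : r^4 = (q^2-q+1)^2 := by rw [← hr2]; ring
  refine ⟨?_, ?_, ?_, ?_⟩
  · rw [hdF]; simp only [hF1]; rw [e1, e2, hz0, hp]
    field_simp
    ring_nf
    linear_combination (q^3 - q) * hr2
  · rw [hd2']; simp only [hF2]; rw [e1, e2, hp]
    field_simp
    ring_nf
    linear_combination (-(q^2) - q^3) * hr2
  · rw [hd3']; simp only [hF3]; rw [e1, e2, hp]
    field_simp
    ring_nf
    try linarith
  · rw [hd4']; simp only [hF4]; rw [e1, e2, hp]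
    norm_num [Nat.factorial]
    field_simp
    ring_nf
    linear_combination (-24*(q^3+q^4)) * hr4
end

section
/- Let q>0, r = sqrt(q^2-q+1), p = 1/(1+q^3), u0 ∈ ℝ, α = u0 + 1/r, β = u0 - q/r, z0 = u0 + (q-1)/r. For the function h(y) := (u0^2 - y^2)/2 - u0 z0 + (p/2) log((u0-α)^2 + y^2) + ((1-p)/2) log((u0-β)^2 + y^2), the derivative satisfies h'(y) = -y^3 (y^2 + q/r^2) / ((y^2 + 1/r^2)(y^2 + q^2/r^2)) for all real y; in particular h'(y) < 0 for y > 0 and h'(y) > 0 for y < 0, so h has a strict global maximum at y = 0. -/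
set_option maxHeartbeats 1600000


theorem steepest_descent_u_contour (q : ℝ) (hq : 0 < q)
    (r : ℝ) (hr : r = Real.sqrt (q^2 - q + 1))
    (p : ℝ) (hp : p = 1 / (1 + q^3))
    (u0 : ℝ)
    (α β z0 : ℝ) (hα : α = u0 + 1 / r) (hβ : β = u0 - q / r)
    (hz0 : z0 = u0 + (q - 1) / r)
    (h : ℝ → ℝ)
    (hh : h = fun y => (u0^2 - y^2) / 2 - u0 * z0
      + (p / 2) * Real.log ((u0 - α)^2 + y^2)
      + ((1 - p) / 2) * Real.log ((u0 - β)^2 + y^2)) :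
    (∀ y : ℝ, deriv h y =
      -y^3 * (y^2 + q / r^2) / ((y^2 + 1 / r^2) * (y^2 + q^2 / r^2))) ∧
    (∀ y : ℝ, 0 < y → deriv h y < 0) ∧
    (∀ y : ℝ, y < 0 → 0 < deriv h y) ∧
    (∀ y : ℝ, y ≠ 0 → h y < h 0) := by
  have hq2 : (0:ℝ) < q^2 - q + 1 := by nlinarith [sq_nonneg (q-1), sq_nonneg q]
  have hr2 : r^2 = q^2 - q + 1 := by rw [hr]; exact Real.sq_sqrt hq2.le
  have hrpos : 0 < r := by rw [hr]; exact Real.sqrt_pos.mpr hq2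
  have hr2pos : (0:ℝ) < r^2 := by positivity
  have hrne : r ≠ 0 := hrpos.ne'
  have ha : (u0 - α)^2 = 1 / r^2 := by rw [hα]; field_simp; ring
  have hb : (u0 - β)^2 = q^2 / r^2 := by rw [hβ]; field_simp; ring
  have hapos : ∀ y : ℝ, (0:ℝ) < 1 / r^2 + y^2 := by intro y; positivity
  have hbpos : ∀ y : ℝ, (0:ℝ) < q^2 / r^2 + y^2 := by intro y; positivity
  have hder : ∀ y : ℝ, HasDerivAt h
      (-y + p * y / (1 / r^2 + y^2) + (1 - p) * y / (q^2 / r^2 + y^2)) y := by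
    intro y
    rw [hh]
    have hsq : HasDerivAt (fun x : ℝ => x^2) (2*y^1) y := hasDerivAt_pow 2 y
    have h1 : HasDerivAt (fun x : ℝ => (u0^2 - x^2)/2 - u0*z0) (-y) y := by
      have := ((hasDerivAt_const y (u0^2)).sub hsq).div_const 2
      have := this.sub_const (u0*z0)
      exact this.congr_deriv (by ring)
    have h2 : HasDerivAt (fun x : ℝ => (p/2) * Real.log ((u0-α)^2 + x^2))
        ((p/2) * (((u0-α)^2 + y^2)⁻¹ * (2*y^1))) y := by
      have hin : HasDerivAt (fun x : ℝ => (u0-α)^2 + x^2) (2*y^1) y :=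
        hsq.const_add _
      have hlog : HasDerivAt Real.log ((u0-α)^2 + y^2)⁻¹ ((u0-α)^2 + y^2) :=
        Real.hasDerivAt_log (by rw [ha]; exact (hapos y).ne')
      exact (hlog.comp y hin).const_mul (p/2)
    have h3 : HasDerivAt (fun x : ℝ => ((1-p)/2) * Real.log ((u0-β)^2 + x^2))
        (((1-p)/2) * (((u0-β)^2 + y^2)⁻¹ * (2*y^1))) y := by
      have hin : HasDerivAt (fun x : ℝ => (u0-β)^2 + x^2) (2*y^1) y :=
        hsq.const_add _
      have hlog : HasDerivAt Real.log ((u0-β)^2 + y^2)⁻¹ ((u0-β)^2 + y^2) :=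
        Real.hasDerivAt_log (by rw [hb]; exact (hbpos y).ne')
      exact (hlog.comp y hin).const_mul ((1-p)/2)
    have := (h1.add h2).add h3
    refine this.congr_deriv ?_
    rw [ha, hb]
    ring
  have hp3 : (0:ℝ) < 1 + q^3 := by positivity
  have key1 : ∀ y : ℝ, deriv h y =
      -y + p * y / (1 / r^2 + y^2) + (1 - p) * y / (q^2 / r^2 + y^2) :=
    fun y => (hder y).deriv
  have key : ∀ y : ℝ, deriv h y =
      -y^3 * (y^2 + q / r^2) / ((y^2 + 1 / r^2) * (y^2 + q^2 / r^2)) := by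
    intro y
    rw [key1 y, hr2, hp]
    have d1 : (0:ℝ) < 1 / (q^2 - q + 1) + y^2 := by positivity
    have d2 : (0:ℝ) < q^2 / (q^2 - q + 1) + y^2 := by positivity
    have d3 : (0:ℝ) < y^2 + 1 / (q^2 - q + 1) := by positivity
    have d4 : (0:ℝ) < y^2 + q^2 / (q^2 - q + 1) := by positivity
    generalize hs : q^2 - q + 1 = s at *
    field_simp
    rw [← hs]
    ring
  refine ⟨key, ?_, ?_, ?_⟩
  · intro y hy
    rw [key y]
    apply div_neg_of_neg_of_pos
    · have : (0:ℝ) < y^2 + q / r^2 := by positivity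
      nlinarith [pow_pos hy 3]
    · have h1 : (0:ℝ) < y^2 + 1 / r^2 := by positivity
      have h2 : (0:ℝ) < y^2 + q^2 / r^2 := by positivity
      positivity
  · intro y hy
    rw [key y]
    apply div_pos
    · have h0 : (0:ℝ) < q / r^2 := by positivity
      have : y^3 < 0 := Odd.pow_neg ⟨1, by norm_num⟩ hy
      nlinarith [sq_nonneg y]
    · have h1 : (0:ℝ) < y^2 + 1 / r^2 := by positivity
      have h2 : (0:ℝ) < y^2 + q^2 / r^2 := by positivity
      positivity
  · have hdiff : Differentiable ℝ h := fun y => (hder y).differentiableAt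
    have hcont := hdiff.continuous
    have hanti : StrictAntiOn h (Set.Ici 0) := by
      apply strictAntiOn_of_deriv_neg (convex_Ici 0) hcont.continuousOn
      intro y hy
      rw [interior_Ici] at hy
      rw [key y]
      apply div_neg_of_neg_of_pos
      · have : (0:ℝ) < y^2 + q / r^2 := by positivity
        nlinarith [pow_pos (Set.mem_Ioi.mp hy) 3]
      · have h1 : (0:ℝ) < y^2 + 1 / r^2 := by positivity
        have h2 : (0:ℝ) < y^2 + q^2 / r^2 := by positivity
        positivity
    have hmono : StrictMonoOn h (Set.Iic 0) := by
      apply strictMonoOn_of_deriv_pos (convex_Iic 0) hcont.continuousOn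
      intro y hy
      rw [interior_Iic] at hy
      rw [key y]
      apply div_pos
      · have h0 : (0:ℝ) < q / r^2 := by positivity
        have : y^3 < 0 := Odd.pow_neg ⟨1, by norm_num⟩ hy
        nlinarith [sq_nonneg y]
      · have h1 : (0:ℝ) < y^2 + 1 / r^2 := by positivity
        have h2 : (0:ℝ) < y^2 + q^2 / r^2 := by positivity
        positivity
    intro y hy
    rcases lt_or_gt_of_ne hy with hneg | hpos
    · exact hmono (Set.mem_Iic.mpr hneg.le) (Set.mem_Iic.mpr le_rfl) hneg
    · exact hanti (Set.mem_Ici.mpr le_rfl) (Set.mem_Ici.mpr hpos.le) hpos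
end

section
/- Let q > 0, r = sqrt(q^2-q+1), p = 1/(1+q^3), u0 ∈ ℝ, α = u0 + 1/r, β = u0 - q/r, z0 = u0 + (q-1)/r, and F(u) = u^2/2 - u z0 + p log|u - α| + (1-p) log|u - β|. For any δ > 0 and n ≥ 1 with δ/n^{1/4} ≤ min(1,q)/(2r), one has n·|F(u0 + δ/n^{1/4}) - F(u0) - (F''''(u0)/4!)(δ/n^{1/4})^4| ≤ (64 δ^5)/(5 n^{1/4}) · (q + 1/q)^5. -/
open Set

lemma iter_step {s : Set ℝ} (hs : UniqueDiffOn ℝ s) {f : ℝ → ℝ} {k : ℕ} {gk gk1 : ℝ → ℝ}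
    (hk : Set.EqOn (iteratedDerivWithin k f s) gk s)
    (hd : ∀ x ∈ s, HasDerivAt gk (gk1 x) x) :
    Set.EqOn (iteratedDerivWithin (k+1) f s) gk1 s := by
  intro x hx
  rw [iteratedDerivWithin_succ, derivWithin_congr hk (hk hx)]
  exact ((hd x hx).hasDerivWithinAt).derivWithin (hs.uniqueDiffWithinAt hx)

lemma iterW_eq_iter {V : Set ℝ} (hV : IsOpen V) {f : ℝ → ℝ} (k : ℕ) {x : ℝ} (hx : x ∈ V) :
    iteratedDerivWithin k f V x = iteratedDeriv k f x := by
  simp only [iteratedDerivWithin, iteratedDeriv, iteratedFDerivWithin_of_isOpen k hV hx]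

lemma hasDerivAt_invPow (a : ℝ) (k : ℕ) {x : ℝ} (hx : x ≠ a) :
    HasDerivAt (fun v => ((v - a)^(k+1))⁻¹) (-((k:ℝ)+1) * ((x - a)^(k+2))⁻¹) x := by
  have hne : x - a ≠ 0 := sub_ne_zero.mpr hx
  have h1 : HasDerivAt (fun v : ℝ => (v - a)^(k+1)) (((k:ℝ)+1) * (x - a)^k) x := by
    have := ((hasDerivAt_id x).sub_const a).fun_pow (k+1)
    simpa using this
  have h2 := h1.inv (pow_ne_zero _ hne)
  refine h2.congr_deriv ?_
  field_simp
  ring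

lemma hd0 (p z0 a b : ℝ) {x : ℝ} (ha : x ≠ a) (hb : x ≠ b) :
    HasDerivAt (fun u => u^2/2 - u*z0 + p*Real.log (u - a) + (1-p)*Real.log (u - b))
      (x - z0 + p*(x-a)⁻¹ + (1-p)*(x-b)⁻¹) x := by
  have hna : x - a ≠ 0 := sub_ne_zero.mpr ha
  have hnb : x - b ≠ 0 := sub_ne_zero.mpr hb
  have A := (hasDerivAt_pow 2 x).div_const 2
  have B := (hasDerivAt_id x).mul_const z0
  have C := (((hasDerivAt_id x).sub_const a).log hna).const_mul p
  have D := (((hasDerivAt_id x).sub_const b).log hnb).const_mul (1-p)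
  have := ((A.sub B).add C).add D
  refine this.congr_deriv ?_
  simp only [id_eq]
  field_simp
  ring

lemma hd1 (p z0 a b : ℝ) {x : ℝ} (ha : x ≠ a) (hb : x ≠ b) :
    HasDerivAt (fun u => u - z0 + p*(u-a)⁻¹ + (1-p)*(u-b)⁻¹)
      (1 - p*((x-a)^2)⁻¹ - (1-p)*((x-b)^2)⁻¹) x := by
  have hna : x - a ≠ 0 := sub_ne_zero.mpr ha
  have hnb : x - b ≠ 0 := sub_ne_zero.mpr hb
  have A := (hasDerivAt_id x).sub_const z0
  have C := (((hasDerivAt_id x).sub_const a).inv hna).const_mul p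
  have D := (((hasDerivAt_id x).sub_const b).inv hnb).const_mul (1-p)
  have := (A.add C).add D
  refine this.congr_deriv ?_
  simp only [id_eq]
  field_simp
  ring

lemma hd2 (p a b : ℝ) {x : ℝ} (ha : x ≠ a) (hb : x ≠ b) :
    HasDerivAt (fun u => 1 - p*((u-a)^2)⁻¹ - (1-p)*((u-b)^2)⁻¹)
      (2*p*((x-a)^3)⁻¹ + 2*(1-p)*((x-b)^3)⁻¹) x := by
  have C := (hasDerivAt_invPow a 1 ha).const_mul p
  have D := (hasDerivAt_invPow b 1 hb).const_mul (1-p)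
  have := ((hasDerivAt_const x (1:ℝ)).sub C).sub D
  refine this.congr_deriv ?_
  push_cast
  ring

lemma hd3 (p a b : ℝ) {x : ℝ} (ha : x ≠ a) (hb : x ≠ b) :
    HasDerivAt (fun u => 2*p*((u-a)^3)⁻¹ + 2*(1-p)*((u-b)^3)⁻¹)
      (-(6*p*((x-a)^4)⁻¹) - 6*(1-p)*((x-b)^4)⁻¹) x := by
  have C := (hasDerivAt_invPow a 2 ha).const_mul (2*p)
  have D := (hasDerivAt_invPow b 2 hb).const_mul (2*(1-p))
  have := C.add D
  refine this.congr_deriv ?_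
  push_cast
  ring

lemma hd4 (p a b : ℝ) {x : ℝ} (ha : x ≠ a) (hb : x ≠ b) :
    HasDerivAt (fun u => -(6*p*((u-a)^4)⁻¹) - 6*(1-p)*((u-b)^4)⁻¹)
      (24*p*((x-a)^5)⁻¹ + 24*(1-p)*((x-b)^5)⁻¹) x := by
  have C := (hasDerivAt_invPow a 3 ha).const_mul (6*p)
  have D := (hasDerivAt_invPow b 3 hb).const_mul (6*(1-p))
  have := (C.neg).sub D
  refine this.congr_deriv ?_
  push_cast
  ring

set_option maxHeartbeats 1000000 in
theorem taylor_estimate (q : ℝ) (hq : 0 < q)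
    (r : ℝ) (hr : r = Real.sqrt (q^2 - q + 1))
    (p : ℝ) (hp : p = 1 / (1 + q^3))
    (u0 : ℝ)
    (α β z0 : ℝ) (hα : α = u0 + 1 / r) (hβ : β = u0 - q / r)
    (hz0 : z0 = u0 + (q - 1) / r)
    (F : ℝ → ℝ)
    (hF : F = fun u => u^2 / 2 - u * z0 + p * Real.log |u - α|
      + (1 - p) * Real.log |u - β|)
    (δ n : ℝ) (hδ : 0 < δ) (hn : 1 ≤ n)
    (hsmall : δ / n ^ ((1:ℝ)/4) ≤ min 1 q / (2 * r)) :
    n * |F (u0 + δ / n ^ ((1:ℝ)/4)) - F u0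
        - (iteratedDeriv 4 F u0 / (Nat.factorial 4)) * (δ / n ^ ((1:ℝ)/4))^4|
      ≤ 64 * δ^5 / (5 * n ^ ((1:ℝ)/4)) * (q + 1/q)^5 := by
  have hn0 : (0:ℝ) < n := lt_of_lt_of_le one_pos hn
  set t : ℝ := n ^ ((1:ℝ)/4) with htdef
  have ht0 : 0 < t := Real.rpow_pos_of_pos hn0 _
  have ht4 : t^4 = n := by
    rw [htdef, ← Real.rpow_natCast (n ^ ((1:ℝ)/4)) 4, ← Real.rpow_mul hn0.le]
    norm_num
  set h : ℝ := δ / t with hhdef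
  have hh0 : 0 < h := div_pos hδ ht0
  have hq2 : (0:ℝ) < q^2 - q + 1 := by nlinarith
  have hrpos : 0 < r := by rw [hr]; exact Real.sqrt_pos.mpr hq2
  have hr2 : r^2 = q^2 - q + 1 := by rw [hr]; exact Real.sq_sqrt hq2.le
  have hq3 : (0:ℝ) < 1 + q^3 := by positivity
  have hp0 : 0 < p := by rw [hp]; positivity
  have hp1 : p < 1 := by rw [hp, div_lt_one hq3]; nlinarith [pow_pos hq 3]
  have h2r : (0:ℝ) < 2*r := by linarith
  have hh1 : h ≤ 1/(2*r) := le_trans hsmall ((div_le_div_iff_of_pos_right h2r).mpr (min_le_left 1 q))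
  have hh2 : h ≤ q/(2*r) := le_trans hsmall ((div_le_div_iff_of_pos_right h2r).mpr (min_le_right 1 q))
  set X := u0 + h with hX
  have hu0X : u0 < X := by rw [hX]; linarith only [hh0]
  have hstep : 1/r - 1/(2*r) = 1/(2*r) := by field_simp; ring
  have hmemA : ∀ u ∈ Icc u0 X, 1/(2*r) ≤ α - u := by
    intro u hu
    have h2 := hu.2
    rw [hX] at h2
    rw [hα]
    linarith only [h2, hh1, hstep]
  have hmemB : ∀ u ∈ Icc u0 X, q/r ≤ u - β := by
    intro u hu
    have h1 := hu.1
    rw [hβ]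
    linarith only [h1]
  have hpos2r : (0:ℝ) < 1/(2*r) := by positivity
  have hposqr : (0:ℝ) < q/r := by positivity
  have huneα : ∀ u ∈ Icc u0 X, u ≠ α := by
    intro u hu
    have := hmemA u hu; intro hc; rw [hc] at this; linarith only [this, hpos2r]
  have huneβ : ∀ u ∈ Icc u0 X, u ≠ β := by
    intro u hu
    have := hmemB u hu; intro hc; rw [hc] at this; linarith only [this, hposqr]
  -- rewrite F without abs
  set G : ℝ → ℝ := fun u => u^2/2 - u*z0 + p*Real.log (u - α) + (1-p)*Real.log (u - β)
    with hG
  have hF2 : F = G := by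
    funext u; rw [hF, hG]; simp [Real.log_abs]
  rw [hF2]
  -- derivative family
  set g1 : ℝ → ℝ := fun u => u - z0 + p*(u-α)⁻¹ + (1-p)*(u-β)⁻¹ with hg1
  set g2 : ℝ → ℝ := fun u => 1 - p*((u-α)^2)⁻¹ - (1-p)*((u-β)^2)⁻¹ with hg2
  set g3 : ℝ → ℝ := fun u => 2*p*((u-α)^3)⁻¹ + 2*(1-p)*((u-β)^3)⁻¹ with hg3
  set g4 : ℝ → ℝ := fun u => -(6*p*((u-α)^4)⁻¹) - 6*(1-p)*((u-β)^4)⁻¹ with hg4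
  set g5 : ℝ → ℝ := fun u => 24*p*((u-α)^5)⁻¹ + 24*(1-p)*((u-β)^5)⁻¹ with hg5
  have hs : UniqueDiffOn ℝ (Icc u0 X) := uniqueDiffOn_Icc hu0X
  have eq0 : Set.EqOn (iteratedDerivWithin 0 G (Icc u0 X)) G (Icc u0 X) := by
    intro x _; rw [iteratedDerivWithin_zero]
  have eq1 : Set.EqOn (iteratedDerivWithin 1 G (Icc u0 X)) g1 (Icc u0 X) := iter_step hs eq0 (fun x hx => hd0 p z0 α β (huneα x hx) (huneβ x hx))
  have eq2 : Set.EqOn (iteratedDerivWithin 2 G (Icc u0 X)) g2 (Icc u0 X) := iter_step hs eq1 (fun x hx => hd1 p z0 α β (huneα x hx) (huneβ x hx))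
  have eq3 : Set.EqOn (iteratedDerivWithin 3 G (Icc u0 X)) g3 (Icc u0 X) := iter_step hs eq2 (fun x hx => hd2 p α β (huneα x hx) (huneβ x hx))
  have eq4 : Set.EqOn (iteratedDerivWithin 4 G (Icc u0 X)) g4 (Icc u0 X) := iter_step hs eq3 (fun x hx => hd3 p α β (huneα x hx) (huneβ x hx))
  have eq5 : Set.EqOn (iteratedDerivWithin 5 G (Icc u0 X)) g5 (Icc u0 X) := iter_step hs eq4 (fun x hx => hd4 p α β (huneα x hx) (huneβ x hx))
  -- global iterated derivative at u0 via open interval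
  have hβα : β < α := by
    have h1r : 0 < 1/r := by positivity
    rw [hα, hβ]; linarith only [h1r, hposqr]
  have hVsub : Icc u0 X ⊆ Ioo β α := by
    intro u hu
    constructor
    · have := hmemB u hu; linarith only [this, hposqr]
    · have := hmemA u hu; linarith only [this, hpos2r]
  have hu0V : u0 ∈ Ioo β α := hVsub (left_mem_Icc.mpr hu0X.le)
  have hsV : UniqueDiffOn ℝ (Ioo β α) := isOpen_Ioo.uniqueDiffOn
  have hVneα : ∀ u ∈ Ioo β α, u ≠ α := fun u hu => ne_of_lt hu.2
  have hVneβ : ∀ u ∈ Ioo β α, u ≠ β := fun u hu => (ne_of_lt hu.1).symm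
  have eqV0 : Set.EqOn (iteratedDerivWithin 0 G (Ioo β α)) G (Ioo β α) := by
    intro x _; rw [iteratedDerivWithin_zero]
  have eqV1 : Set.EqOn (iteratedDerivWithin 1 G (Ioo β α)) g1 (Ioo β α) := iter_step hsV eqV0 (fun x hx => hd0 p z0 α β (hVneα x hx) (hVneβ x hx))
  have eqV2 : Set.EqOn (iteratedDerivWithin 2 G (Ioo β α)) g2 (Ioo β α) := iter_step hsV eqV1 (fun x hx => hd1 p z0 α β (hVneα x hx) (hVneβ x hx))
  have eqV3 : Set.EqOn (iteratedDerivWithin 3 G (Ioo β α)) g3 (Ioo β α) := iter_step hsV eqV2 (fun x hx => hd2 p α β (hVneα x hx) (hVneβ x hx))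
  have eqV4 : Set.EqOn (iteratedDerivWithin 4 G (Ioo β α)) g4 (Ioo β α) := iter_step hsV eqV3 (fun x hx => hd3 p α β (hVneα x hx) (hVneβ x hx))
  have hiter4 : iteratedDeriv 4 G u0 = g4 u0 := by
    rw [← iterW_eq_iter isOpen_Ioo 4 hu0V]
    exact eqV4 hu0V
  -- smoothness
  have hcdat : ∀ x : ℝ, x ≠ α → x ≠ β → ContDiffAt ℝ 4 G x := by
    intro x hxa hxb
    rw [hG]
    apply ContDiffAt.add
    apply ContDiffAt.add
    apply ContDiffAt.sub
    · exact (contDiffAt_id.pow 2).div_const 2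
    · exact contDiffAt_id.mul contDiffAt_const
    · exact contDiffAt_const.mul ((Real.contDiffAt_log.mpr (sub_ne_zero.mpr hxa)).comp x
        (contDiffAt_id.sub contDiffAt_const))
    · exact contDiffAt_const.mul ((Real.contDiffAt_log.mpr (sub_ne_zero.mpr hxb)).comp x
        (contDiffAt_id.sub contDiffAt_const))
  have hcd : ContDiffOn ℝ 4 G (Icc u0 X) :=
    fun x hx => (hcdat x (huneα x hx) (huneβ x hx)).contDiffWithinAt
  have hdiff : DifferentiableOn ℝ (iteratedDerivWithin 4 G (Icc u0 X)) (Ioo u0 X) := by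
    intro y hy
    have hys : y ∈ Icc u0 X := Ioo_subset_Icc_self hy
    have hg4d : DifferentiableWithinAt ℝ g4 (Ioo u0 X) y :=
      (hd4 p α β (huneα y hys) (huneβ y hys)).differentiableAt.differentiableWithinAt
    exact hg4d.congr (fun z hz => eq4 (Ioo_subset_Icc_self hz)) (eq4 hys)
  have hlag0 := taylor_mean_remainder_lagrange (n := 4) hu0X.ne
    (by rw [uIcc_of_le hu0X.le]; exact hcd)
    (by rw [uIcc_of_le hu0X.le, uIoo_of_le hu0X.le]; exact hdiff)
  rw [uIcc_of_le hu0X.le, uIoo_of_le hu0X.le] at hlag0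
  obtain ⟨x', hx', hlag⟩ := hlag0
  have hx's : x' ∈ Icc u0 X := Ioo_subset_Icc_self hx'
  have hu0s : u0 ∈ Icc u0 X := left_mem_Icc.mpr hu0X.le
  -- values at u0
  have euα : u0 - α = -(1/r) := by rw [hα]; ring
  have euβ : u0 - β = q/r := by rw [hβ]; ring
  have hrne : r ≠ 0 := ne_of_gt hrpos
  have hqne : q ≠ 0 := ne_of_gt hq
  have hq3ne : 1 + q^3 ≠ 0 := ne_of_gt hq3
  have hval1 : g1 u0 = 0 := by
    rw [hg1]
    simp only
    rw [euα, euβ, hz0, hp]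
    have h1q : (1:ℝ)+q ≠ 0 := by positivity
    have hq13 : (1:ℝ)+q^3 = (1+q)*r^2 := by rw [hr2]; ring
    rw [hq13]
    field_simp
    linear_combination (1+q) * hr2
  have hval2 : g2 u0 = 0 := by
    rw [hg2]
    simp only
    rw [euα, euβ, hp]
    have h1q : (1:ℝ)+q ≠ 0 := by positivity
    have hq13 : (1:ℝ)+q^3 = (1+q)*r^2 := by rw [hr2]; ring
    rw [hq13]
    field_simp
    linear_combination (-(1+q)) * hr2
  have hval3 : g3 u0 = 0 := by
    rw [hg3]
    simp only
    rw [euα, euβ, hp]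
    have h1q : (1:ℝ)+q ≠ 0 := by positivity
    have hq13 : (1:ℝ)+q^3 = (1+q)*r^2 := by rw [hr2]; ring
    rw [hq13]
    field_simp
    linear_combination (2*r*(1+q)) * hr2
  -- taylor polynomial evaluation
  have hfact4 : ((Nat.factorial 4 : ℕ) : ℝ) = 24 := by norm_num [Nat.factorial]
  have hXu0 : X - u0 = h := by rw [hX]; ring
  have htay : taylorWithinEval G 4 (Icc u0 X) u0 X
      = G u0 + (iteratedDeriv 4 G u0 / 24) * h^4 := by
    rw [taylor_within_apply]
    rw [Finset.sum_range_succ, Finset.sum_range_succ, Finset.sum_range_succ,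
      Finset.sum_range_succ, Finset.sum_range_one]
    rw [eq1 hu0s, eq2 hu0s, eq3 hu0s, eq4 hu0s,
      hval1, hval2, hval3, hiter4, hXu0]
    norm_num [Nat.factorial, smul_eq_mul]
    ring
  -- the remainder identity
  have hrem : G X - G u0 - iteratedDeriv 4 G u0 / (Nat.factorial 4 : ℕ) * h^4
      = g5 x' * h^5 / 120 := by
    rw [hfact4]
    have h5 : iteratedDerivWithin 5 G (Icc u0 X) x' = g5 x' := eq5 hx's
    rw [htay, h5, hXu0] at hlag
    norm_num [Nat.factorial] at hlag
    linarith only [hlag]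
  -- bound on g5 on the interval
  have hK : (0:ℝ) < q + 1/q := by positivity
  have hbound : |g5 x'| ≤ 1536 * (q + 1/q)^5 := by
    have ha : 1/(2*r) ≤ α - x' := hmemA x' hx's
    have hb : q/r ≤ x' - β := hmemB x' hx's
    have ha0 : 0 < α - x' := lt_of_lt_of_le hpos2r ha
    have hb0 : 0 < x' - β := lt_of_lt_of_le hposqr hb
    have hrK : r ≤ q + 1/q := by
      have hK2 : (q+1/q)^2 = q^2 + 2 + (1/q)^2 := by field_simp; ring
      have h2 : r^2 ≤ (q+1/q)^2 := by
        rw [hK2, hr2]; linarith only [hq, sq_nonneg (1/q)]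
      nlinarith only [hK, hrpos, h2]
    have hrqK : r/q ≤ q + 1/q := by
      rw [div_le_iff₀ hq]
      have e : (q+1/q)*q = q^2+1 := by field_simp
      rw [e]
      have h2 : r^2 ≤ (q^2+1)^2 := by
        rw [hr2]; nlinarith only [pow_pos hq 4, sq_nonneg q, hq]
      nlinarith only [hrpos, h2, sq_nonneg q, hq]
    have hrK5 : r^5 ≤ (q+1/q)^5 := pow_le_pow_left₀ hrpos.le hrK 5
    have hrqK5 : (r/q)^5 ≤ (q+1/q)^5 := pow_le_pow_left₀ (by positivity) hrqK 5
    have hia1 : (α - x')⁻¹ ≤ 2*r := by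
      calc (α - x')⁻¹ ≤ (1/(2*r))⁻¹ := by
            apply inv_anti₀ hpos2r ha
        _ = 2*r := by rw [one_div, inv_inv]
    have hib1 : (x' - β)⁻¹ ≤ r/q := by
      calc (x' - β)⁻¹ ≤ (q/r)⁻¹ := by
            apply inv_anti₀ hposqr hb
        _ = r/q := by rw [inv_div]
    have hia : ((α - x')^5)⁻¹ ≤ (2*r)^5 := by
      rw [← inv_pow]
      exact pow_le_pow_left₀ (inv_nonneg.mpr ha0.le) hia1 5
    have hib : ((x' - β)^5)⁻¹ ≤ (r/q)^5 := by
      rw [← inv_pow]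
      exact pow_le_pow_left₀ (inv_nonneg.mpr hb0.le) hib1 5
    have habs : |g5 x'| ≤ 24*p*((α - x')^5)⁻¹ + 24*(1-p)*((x' - β)^5)⁻¹ := by
      rw [hg5]
      simp only
      have e5 : ((x' - α)^5) = -((α - x')^5) := by ring
      rw [e5, inv_neg, mul_neg]
      refine (abs_add_le _ _).trans ?_
      have h1p : (0:ℝ) ≤ 1 - p := by linarith only [hp1]
      have w1 : |-(24*p*((α - x')^5)⁻¹)| = 24*p*((α - x')^5)⁻¹ := by
        rw [abs_neg]; exact abs_of_nonneg (by positivity)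
      have w2 : |24*(1-p)*((x' - β)^5)⁻¹| = 24*(1-p)*((x' - β)^5)⁻¹ :=
        abs_of_nonneg (mul_nonneg (mul_nonneg (by norm_num) h1p) (by positivity))
      rw [w1, w2]
    refine habs.trans ?_
    have s1 : 24*p*((α - x')^5)⁻¹ ≤ 24*(2*r)^5 := by
      calc 24*p*((α - x')^5)⁻¹ ≤ 24*1*(2*r)^5 := by
            apply mul_le_mul (by linarith only [hp1]) hia (by positivity) (by norm_num)
        _ = 24*(2*r)^5 := by ring
    have s2 : 24*(1-p)*((x' - β)^5)⁻¹ ≤ 24*(r/q)^5 := by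
      calc 24*(1-p)*((x' - β)^5)⁻¹ ≤ 24*1*(r/q)^5 := by
            apply mul_le_mul (by linarith only [hp0]) hib (by positivity) (by norm_num)
        _ = 24*(r/q)^5 := by ring
    have e32 : 24*(2*r)^5 = 768*r^5 := by ring
    rw [e32] at s1
    linarith only [hrK5, hrqK5, pow_nonneg hK.le 5, s1, s2]
  -- final computation
  rw [hrem]
  have hterm : |g5 x' * h^5 / 120| ≤ 1536 * (q + 1/q)^5 * h^5 / 120 := by
    rw [abs_div, abs_mul, abs_of_pos (by positivity : (0:ℝ) < (120:ℝ)),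
      abs_of_pos (by positivity : (0:ℝ) < h^5)]
    gcongr
  calc n * |g5 x' * h^5 / 120| ≤ n * (1536 * (q + 1/q)^5 * h^5 / 120) := by
        apply mul_le_mul_of_nonneg_left hterm hn0.le
    _ = 64 * δ^5 / (5 * t) * (q + 1/q)^5 := by
        rw [hhdef]
        rw [← ht4]
        field_simp
        ring
end

section
/- Under the assumptions of the previous lemma, for any u with |u - u0| ≤ δ/n^{1/4} ≤ min(1,q)/(2r), the fifth derivative of F satisfies |F^{(5)}(u)|/5! ≤ (64/5)(q + 1/q)^5. -/
set_option maxHeartbeats 1000000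

private lemma derivEqOn {S : Set ℝ} (hS : IsOpen S) {f g fd : ℝ → ℝ}
    (hfg : Set.EqOn f g S) (hder : ∀ x ∈ S, HasDerivAt g (fd x) x) :
    Set.EqOn (deriv f) fd S := fun x hx => by
  have h1 : f =ᶠ[nhds x] g := Filter.eventuallyEq_of_mem (hS.mem_nhds hx) hfg
  rw [h1.deriv_eq, (hder x hx).deriv]

private lemma hasDerivAt_inv_pow_left (a : ℝ) (m : ℕ) (x : ℝ) (h : a - x ≠ 0) :
    HasDerivAt (fun y => ((a - y) ^ (m+1))⁻¹) ((m+1 : ℝ) * ((a - x) ^ (m+2))⁻¹) x := by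
  have h1 : HasDerivAt (fun y : ℝ => a - y) (-1) x := by
    simpa using (hasDerivAt_id x).const_sub a
  have h2 := (h1.pow (m+1)).inv (pow_ne_zero (m+1) h)
  simp only [Nat.add_sub_cancel] at h2
  refine h2.congr_deriv ?_
  push_cast
  simp only [Pi.pow_apply]
  field_simp
  ring

private lemma hasDerivAt_inv_pow_right (b : ℝ) (m : ℕ) (x : ℝ) (h : x - b ≠ 0) :
    HasDerivAt (fun y => ((y - b) ^ (m+1))⁻¹) (-((m+1 : ℝ) * ((x - b) ^ (m+2))⁻¹)) x := by
  have h1 : HasDerivAt (fun y : ℝ => y - b) 1 x := by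
    simpa using (hasDerivAt_id x).sub_const b
  have h2 := (h1.pow (m+1)).inv (pow_ne_zero (m+1) h)
  simp only [Nat.add_sub_cancel] at h2
  refine h2.congr_deriv ?_
  push_cast
  simp only [Pi.pow_apply]
  field_simp
  ring

theorem fifth_derivative_bound (q : ℝ) (hq : 0 < q)
    (r : ℝ) (hr : r = Real.sqrt (q^2 - q + 1))
    (p : ℝ) (hp : p = 1 / (1 + q^3))
    (u0 : ℝ)
    (α β z0 : ℝ) (hα : α = u0 + 1 / r) (hβ : β = u0 - q / r)
    (hz0 : z0 = u0 + (q - 1) / r)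
    (F : ℝ → ℝ)
    (hF : F = fun u => u^2 / 2 - u * z0 + p * Real.log (α - u)
      + (1 - p) * Real.log (u - β))
    (δ n : ℝ) (hδ : 0 < δ) (hn : 1 ≤ n)
    (hsmall : δ / n ^ ((1:ℝ)/4) ≤ min 1 q / (2 * r))
    (u : ℝ) (hu : |u - u0| ≤ δ / n ^ ((1:ℝ)/4)) :
    |iteratedDeriv 5 F u| / (Nat.factorial 5) ≤ (64/5) * (q + 1/q)^5 := by
  have hr0 : 0 < r := by
    rw [hr]; apply Real.sqrt_pos.2; nlinarith
  have hrsq : r ^ 2 = q ^ 2 - q + 1 := by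
    rw [hr, sq, Real.mul_self_sqrt (by nlinarith)]
  have hd : |u - u0| ≤ min 1 q / (2 * r) := le_trans hu hsmall
  have hd1 : |u - u0| ≤ 1 / (2 * r) := le_trans hd (by
    apply div_le_div_of_nonneg_right ?_ (by positivity)
    · exact min_le_left 1 q
    )
  have hd2 : |u - u0| ≤ q / (2 * r) := le_trans hd (by
    apply div_le_div_of_nonneg_right (min_le_right 1 q) (by positivity))
  have habs1 := abs_le.1 hd1
  have habs2 := abs_le.1 hd2
  have haux1 : 1 / r - 1 / (2*r) = 1 / (2*r) := by field_simp; ring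
  have haux2 : q / r - q / (2*r) = q / (2*r) := by field_simp; ring
  have hA : 1 / (2 * r) ≤ α - u := by
    rw [hα]; linarith [habs1.2]
  have hB : q / (2 * r) ≤ u - β := by
    rw [hβ]; linarith [habs2.1]
  have h2r : 0 < 1 / (2 * r) := by positivity
  have hAq : 0 < α - u := lt_of_lt_of_le h2r hA
  have hBq : 0 < u - β := lt_of_lt_of_le (by positivity) hB
  -- p bounds
  have hp0 : 0 < p := by rw [hp]; positivity
  have hp1 : p < 1 := by
    rw [hp]
    rw [div_lt_one (by positivity)]
    nlinarith [pow_pos hq 3]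
  -- set S
  set S : Set ℝ := Set.Ioo β α with hSdef
  have hS : IsOpen S := isOpen_Ioo
  have huS : u ∈ S := ⟨by linarith, by linarith⟩
  -- derivative functions
  set g1 : ℝ → ℝ := fun x => x - z0 - p * ((α - x)^1)⁻¹ + (1-p) * ((x - β)^1)⁻¹ with hg1
  set g2 : ℝ → ℝ := fun x => 1 - p * ((α - x)^2)⁻¹ - (1-p) * ((x - β)^2)⁻¹ with hg2
  set g3 : ℝ → ℝ := fun x => -(2*p) * ((α - x)^3)⁻¹ + (2*(1-p)) * ((x - β)^3)⁻¹ with hg3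
  set g4 : ℝ → ℝ := fun x => -(6*p) * ((α - x)^4)⁻¹ - (6*(1-p)) * ((x - β)^4)⁻¹ with hg4
  set g5 : ℝ → ℝ := fun x => -(24*p) * ((α - x)^5)⁻¹ + (24*(1-p)) * ((x - β)^5)⁻¹ with hg5
  have hAx : ∀ x ∈ S, α - x ≠ 0 := fun x hx => ne_of_gt (by simp [hSdef] at hx; linarith [hx.2])
  have hBx : ∀ x ∈ S, x - β ≠ 0 := fun x hx => ne_of_gt (by simp [hSdef] at hx; linarith [hx.1])
  have hderF : ∀ x ∈ S, HasDerivAt F (g1 x) x := by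
    intro x hx
    rw [hF]
    have hlog1 : HasDerivAt (fun y : ℝ => Real.log (α - y)) ((α - x)⁻¹ * (-1)) x := by
      have h1 : HasDerivAt (fun y : ℝ => α - y) (-1) x := by
        simpa using (hasDerivAt_id x).const_sub α
      exact (Real.hasDerivAt_log (hAx x hx)).comp x h1
    have hlog2 : HasDerivAt (fun y : ℝ => Real.log (y - β)) ((x - β)⁻¹ * 1) x := by
      have h1 : HasDerivAt (fun y : ℝ => y - β) 1 x := by
        simpa using (hasDerivAt_id x).sub_const β
      exact (Real.hasDerivAt_log (hBx x hx)).comp x h1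
    have h0 : HasDerivAt (fun y : ℝ => y * z0) z0 x := by
      simpa using (hasDerivAt_id x).mul_const z0
    have hq2 : HasDerivAt (fun y : ℝ => y^2 / 2 - y * z0)
        (2 * x ^ 1 / 2 - z0) x := ((hasDerivAt_pow 2 x).div_const 2).sub h0
    have := (hq2.add (hlog1.const_mul p)).add (hlog2.const_mul (1 - p))
    refine this.congr_deriv ?_
    simp [hg1]
    ring
  have hder1 : ∀ x ∈ S, HasDerivAt g1 (g2 x) x := by
    intro x hx
    have h1 := (hasDerivAt_inv_pow_left α 0 x (hAx x hx)).const_mul p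
    have h2 := (hasDerivAt_inv_pow_right β 0 x (hBx x hx)).const_mul (1-p)
    have h0 : HasDerivAt (fun y : ℝ => y - z0) 1 x := by
      simpa using (hasDerivAt_id x).sub_const z0
    have := (h0.sub h1).add h2
    refine this.congr_deriv ?_
    simp [hg2]
    push_cast
    ring
  have hder2 : ∀ x ∈ S, HasDerivAt g2 (g3 x) x := by
    intro x hx
    have h1 := (hasDerivAt_inv_pow_left α 1 x (hAx x hx)).const_mul p
    have h2 := (hasDerivAt_inv_pow_right β 1 x (hBx x hx)).const_mul (1-p)
    have := ((hasDerivAt_const x (1:ℝ)).sub h1).sub h2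
    refine this.congr_deriv ?_
    simp [hg3]
    push_cast
    ring
  have hder3 : ∀ x ∈ S, HasDerivAt g3 (g4 x) x := by
    intro x hx
    have h1 := (hasDerivAt_inv_pow_left α 2 x (hAx x hx)).const_mul (-(2*p))
    have h2 := (hasDerivAt_inv_pow_right β 2 x (hBx x hx)).const_mul (2*(1-p))
    have := h1.add h2
    refine this.congr_deriv ?_
    simp [hg4]
    push_cast
    ring
  have hder4 : ∀ x ∈ S, HasDerivAt g4 (g5 x) x := by
    intro x hx
    have h1 := (hasDerivAt_inv_pow_left α 3 x (hAx x hx)).const_mul (-(6*p))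
    have h2 := (hasDerivAt_inv_pow_right β 3 x (hBx x hx)).const_mul (6*(1-p))
    have := h1.sub h2
    refine this.congr_deriv ?_
    simp [hg5]
    push_cast
    ring
  -- iterated derivatives
  have e1 : Set.EqOn (iteratedDeriv 1 F) g1 S := by
    rw [iteratedDeriv_one]
    exact derivEqOn hS (fun x _ => rfl) hderF
  have e2 : Set.EqOn (iteratedDeriv 2 F) g2 S := by
    rw [show (2:ℕ) = 1 + 1 from rfl, iteratedDeriv_succ]
    exact derivEqOn hS e1 hder1
  have e3 : Set.EqOn (iteratedDeriv 3 F) g3 S := by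
    rw [show (3:ℕ) = 2 + 1 from rfl, iteratedDeriv_succ]
    exact derivEqOn hS e2 hder2
  have e4 : Set.EqOn (iteratedDeriv 4 F) g4 S := by
    rw [show (4:ℕ) = 3 + 1 from rfl, iteratedDeriv_succ]
    exact derivEqOn hS e3 hder3
  have e5 : Set.EqOn (iteratedDeriv 5 F) g5 S := by
    rw [show (5:ℕ) = 4 + 1 from rfl, iteratedDeriv_succ]
    exact derivEqOn hS e4 hder4
  rw [e5 huS]
  -- numeric bound
  set M : ℝ := q + 1/q with hM
  have hM0 : 0 < M := by rw [hM]; positivity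
  clear_value M
  have hq1 : q * (1/q) = 1 := by field_simp
  have hrM : r ≤ M := by
    have hsq : r^2 ≤ M^2 := by
      rw [hrsq, hM]
      nlinarith [hq1, sq_nonneg (1/q)]
    nlinarith [hr0, hM0, hsq]
  have hrqM : r ≤ q * M := by
    have hqM : q * M = q^2 + 1 := by rw [hM]; nlinarith [hq1]
    have hsq : r^2 ≤ (q*M)^2 := by
      rw [hrsq, hqM]
      nlinarith [sq_nonneg q, sq_nonneg (q^2)]
    nlinarith [hr0, mul_pos hq hM0, hsq]
  have hbound1 : ((α - u)^5)⁻¹ ≤ (2*M)^5 := by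
    rw [inv_le_comm₀ (by positivity) (by positivity), ← inv_pow]
    calc (2*M)⁻¹^5 ≤ (2*r)⁻¹^5 := by
          apply pow_le_pow_left₀ (by positivity)
          exact inv_anti₀ (by positivity) (by linarith)
      _ ≤ (α - u)^5 := by
          apply pow_le_pow_left₀ (by positivity)
          rw [← one_div]
          simpa using hA
  have hbound2 : ((u - β)^5)⁻¹ ≤ (2*M)^5 := by
    rw [inv_le_comm₀ (by positivity) (by positivity), ← inv_pow]
    calc (2*M)⁻¹^5 ≤ (q/(2*r))^5 := by
          apply pow_le_pow_left₀ (by positivity)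
          rw [inv_le_iff_one_le_mul₀ (by positivity)]
          rw [div_mul_eq_mul_div, le_div_iff₀ (by positivity)]
          nlinarith
      _ ≤ (u - β)^5 := pow_le_pow_left₀ (by positivity) hB 5
  have hg5b : |g5 u| ≤ 768 * M^5 := by
    simp only [hg5]
    have h1 : 0 < ((α - u)^5)⁻¹ := by positivity
    have h2 : 0 < ((u - β)^5)⁻¹ := by positivity
    have := abs_add_le (-(24*p) * ((α - u)^5)⁻¹) ((24*(1-p)) * ((u - β)^5)⁻¹)
    have hc1 : (0:ℝ) < 24*p := by linarith
    have hc2 : (0:ℝ) < 24*(1-p) := by linarith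
    have ha : |(-(24*p)) * ((α - u)^5)⁻¹| = 24*p * ((α - u)^5)⁻¹ := by
      rw [abs_mul, abs_of_pos h1, abs_neg, abs_of_pos hc1]
    have hb : |(24*(1-p)) * ((u - β)^5)⁻¹| = 24*(1-p) * ((u - β)^5)⁻¹ := by
      rw [abs_mul, abs_of_pos h2, abs_of_pos hc2]
    have h5 : (2*M)^5 = 32 * M^5 := by ring
    nlinarith [mul_le_mul_of_nonneg_left hbound1 hc1.le,
      mul_le_mul_of_nonneg_left hbound2 hc2.le]
  have hfac : ((Nat.factorial 5 : ℕ) : ℝ) = 120 := by norm_num [Nat.factorial]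
  rw [hfac, div_le_iff₀ (by norm_num)]
  have hM5 : (0:ℝ) < M ^ 5 := pow_pos hM0 5
  calc |g5 u| ≤ 768 * M ^ 5 := hg5b
    _ ≤ 64 / 5 * M ^ 5 * 120 := by nlinarith [hM5]
end
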